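/- For the piecewise-linear functions β(x) = 61x/100 and β̃(x) defined on [0,1] by β̃(x) = x for 0 ≤ x ≤ 1/3, β̃(x) = 9x/100 + 91/300 for 1/3 < x ≤ 2/3, and β̃(x) = 63x/100 − 17/300 for 2/3 < x ≤ 1, the integral ∫₀¹ (β̃(x) − β(x))(x − β(x))/β'(x) dx is strictly negative, while ∫₀¹ (β̃(x) − β(x))(x − β̃(x))/β̃'(x) dx is strictly positive (where β' and β̃' denote the piecewise derivatives, defined almost everywhere). -/

import Mathlib

open MeasureTheory Set

noncomputable def sp_beta (x : ℝ) : ℝ := 61 * x / 100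

noncomputable def sp_betat (x : ℝ) : ℝ :=
  if x ≤ 1/3 then x
  else if x ≤ 2/3 then 9 * x / 100 + 91 / 300
  else 63 * x / 100 - 17 / 300

noncomputable def sp_betat' (x : ℝ) : ℝ :=
  if x ≤ 1/3 then 1
  else if x ≤ 2/3 then 9 / 100
  else 63 / 100

lemma sp_poly_integral (a b A B C : ℝ) :
    ∫ x in a..b, (A * x ^ 2 + B * x + C) =
      A * (b ^ 3 - a ^ 3) / 3 + B * (b ^ 2 - a ^ 2) / 2 + C * (b - a) := by
  have h : ∀ x ∈ Set.uIcc a b,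
      HasDerivAt (fun x : ℝ => A * x ^ 3 / 3 + B * x ^ 2 / 2 + C * x)
        (A * x ^ 2 + B * x + C) x := by
    intro x _
    have h1 := (((hasDerivAt_pow 3 x).const_mul A).div_const 3).add
      (((hasDerivAt_pow 2 x).const_mul B).div_const 2)
    have h2 := h1.add ((hasDerivAt_id x).const_mul C)
    refine h2.congr_deriv ?_
    ring
  have hint : IntervalIntegrable (fun x : ℝ => A * x ^ 2 + B * x + C) volume a b :=
    (by continuity : Continuous fun x : ℝ => A * x ^ 2 + B * x + C).intervalIntegrable a b
  rw [intervalIntegral.integral_eq_sub_of_hasDerivAt h hint]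
  ring

lemma sp_piece (f : ℝ → ℝ) (a b A B C : ℝ)
    (h : ∀ x ∈ Set.uIoc a b, f x = A * x ^ 2 + B * x + C) :
    IntervalIntegrable f volume a b ∧
    ∫ x in a..b, f x = A * (b ^ 3 - a ^ 3) / 3 + B * (b ^ 2 - a ^ 2) / 2 + C * (b - a) := by
  have hg : IntervalIntegrable (fun x : ℝ => A * x ^ 2 + B * x + C) volume a b :=
    (by continuity : Continuous fun x : ℝ => A * x ^ 2 + B * x + C).intervalIntegrable a b
  have hae : (fun x : ℝ => A * x ^ 2 + B * x + C) =ᵐ[volume.restrict (Set.uIoc a b)] f := by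
    refine (ae_restrict_iff' measurableSet_uIoc).mpr (ae_of_all _ ?_)
    intro x hx
    exact (h x hx).symm
  refine ⟨hg.congr_ae hae, ?_⟩
  rw [intervalIntegral.integral_congr_ae (ae_of_all _ h), sp_poly_integral]

theorem second_price_not_quasimonotone :
    (∫ x in (0:ℝ)..1, (sp_betat x - sp_beta x) * (x - sp_beta x) / (61 / 100)) < 0 ∧
    0 < ∫ x in (0:ℝ)..1, (sp_betat x - sp_beta x) * (x - sp_betat x) / sp_betat' x := by
  have h13 : (0:ℝ) ≤ 1/3 := by norm_num
  have h23 : (1/3:ℝ) ≤ 2/3 := by norm_num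
  have h231 : (2/3:ℝ) ≤ 1 := by norm_num
  constructor
  · set f : ℝ → ℝ := fun x => (sp_betat x - sp_beta x) * (x - sp_beta x) / (61 / 100) with hf
    have p1 := sp_piece f 0 (1/3) (1521/6100) 0 0 (by
      intro x hx
      rw [Set.uIoc_of_le h13] at hx
      simp only [hf, sp_betat, sp_beta, if_pos hx.2]
      ring)
    have p2 := sp_piece f (1/3) (2/3) (-6084/18300) (3549/18300) 0 (by
      intro x hx
      rw [Set.uIoc_of_le h23] at hx
      simp only [hf, sp_betat, sp_beta, if_neg (not_le.mpr hx.1), if_pos hx.2]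
      ring)
    have p3 := sp_piece f (2/3) 1 (234/18300) (-663/18300) 0 (by
      intro x hx
      rw [Set.uIoc_of_le h231] at hx
      have h1 : ¬ x ≤ 1/3 := by linarith [hx.1]
      have h2 : ¬ x ≤ 2/3 := not_le.mpr hx.1
      simp only [hf, sp_betat, sp_beta, if_neg h1, if_neg h2]
      ring)
    have hsplit : ∫ x in (0:ℝ)..1, f x =
        (∫ x in (0:ℝ)..(1/3), f x) + (∫ x in (1/3:ℝ)..(2/3), f x) + (∫ x in (2/3:ℝ)..1, f x) := by
      rw [intervalIntegral.integral_add_adjacent_intervals p1.1 p2.1,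
        intervalIntegral.integral_add_adjacent_intervals (p1.1.trans p2.1) p3.1]
    rw [hsplit, p1.2, p2.2, p3.2]
    norm_num
  · set f : ℝ → ℝ := fun x => (sp_betat x - sp_beta x) * (x - sp_betat x) / sp_betat' x with hf
    have p1 := sp_piece f 0 (1/3) 0 0 0 (by
      intro x hx
      rw [Set.uIoc_of_le h13] at hx
      simp only [hf, sp_betat, sp_betat', sp_beta, if_pos hx.2]
      ring)
    have p2 := sp_piece f (1/3) (2/3) (-42588/8100) (39039/8100) (-8281/8100) (by
      intro x hx
      rw [Set.uIoc_of_le h23] at hx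
      simp only [hf, sp_betat, sp_betat', sp_beta, if_neg (not_le.mpr hx.1), if_pos hx.2]
      ring)
    have p3 := sp_piece f (2/3) 1 (666/56700) (-1785/56700) (-289/56700) (by
      intro x hx
      rw [Set.uIoc_of_le h231] at hx
      have h1 : ¬ x ≤ 1/3 := by linarith [hx.1]
      have h2 : ¬ x ≤ 2/3 := not_le.mpr hx.1
      simp only [hf, sp_betat, sp_betat', sp_beta, if_neg h1, if_neg h2]
      ring)
    have hsplit : ∫ x in (0:ℝ)..1, f x =
        (∫ x in (0:ℝ)..(1/3), f x) + (∫ x in (1/3:ℝ)..(2/3), f x) + (∫ x in (2/3:ℝ)..1, f x) := by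
      rw [intervalIntegral.integral_add_adjacent_intervals p1.1 p2.1,
        intervalIntegral.integral_add_adjacent_intervals (p1.1.trans p2.1) p3.1]
    rw [hsplit, p1.2, p2.2, p3.2]
    norm_num
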